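/- For every sequence of injective maps x_n : Fin n → ℝ and every sequence of probabilities p_n ∈ [0,1], if the revealed set P is distributed as the random graph G(n, p_n), then the probability that at most n^{2−0.002} unordered pairs {u,v} of distinct indices are simultaneously close and useful but not deducible tends to 1 as n → ∞. -/

import Mathlib

/-- The product Bernoulli measure on indicator functions of the unordered pairs of distinct
indices of `Fin n`: each pair is revealed independently with probability `p`. -/
noncomputable def gnpMeasure (n : ℕ) (p : ℝ) :
    MeasureTheory.Measure ({e : Sym2 (Fin n) // ¬ e.IsDiag} → Bool) :=
  MeasureTheory.Measure.pi fun _ =>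
    (PMF.bernoulli (min (Real.toNNReal p) 1) (min_le_right _ _)).toMeasure

/-- The set of revealed pairs determined by a sample point `ω`. -/
def revealedSet {n : ℕ} (ω : {e : Sym2 (Fin n) // ¬ e.IsDiag} → Bool) : Set (Sym2 (Fin n)) :=
  {e | ∃ h : ¬ e.IsDiag, ω ⟨e, h⟩ = true}

/-- A tuple `(t 0, …, t (k-1))` of indices is cycle-reconstructible if any assignment of
positions realising the cyclically consecutive distances realises all pairwise distances. -/
def CycleReconstructible {n k : ℕ} (x : Fin n → ℝ) (t : Fin k → Fin n) : Prop :=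
  ∀ w : Fin k → ℝ,
    (∀ (j : ℕ) (h : j + 1 < k),
      |w ⟨j + 1, h⟩ - w ⟨j, Nat.lt_of_succ_lt h⟩| =
        |x (t ⟨j + 1, h⟩) - x (t ⟨j, Nat.lt_of_succ_lt h⟩)|) →
    (∀ h : 0 < k,
      |w ⟨0, h⟩ - w ⟨k - 1, Nat.sub_lt h Nat.one_pos⟩| =
        |x (t ⟨0, h⟩) - x (t ⟨k - 1, Nat.sub_lt h Nat.one_pos⟩)|) →
    ∀ a b : Fin k, |w a - w b| = |x (t a) - x (t b)|

/-- An ordered `k`-tuple contains both `u` and `v` among its entries. -/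
def ContainsBoth {n k : ℕ} (u v : Fin n) (t : Fin k → Fin n) : Prop :=
  (∃ a, t a = u) ∧ ∃ b, t b = v

/-- A pair `{u, v}` is `k`-bad if more than an `n ^ (-0.005)` fraction of the ordered `k`-tuples
of pairwise distinct indices containing both `u` and `v` are not cycle-reconstructible. -/
def KBad {n : ℕ} (x : Fin n → ℝ) (k : ℕ) (u v : Fin n) : Prop :=
  (n : ℝ) ^ (-(0.005 : ℝ)) *
      ({t : Fin k → Fin n | Function.Injective t ∧ ContainsBoth u v t}.ncard : ℝ)
    < ({t : Fin k → Fin n | Function.Injective t ∧ ContainsBoth u v t ∧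
        ¬ CycleReconstructible x t}.ncard : ℝ)

/-- `u` and `v` lie together on a cycle of length at most `m` in the graph `G`. -/
def OnShortCycle {n : ℕ} (G : SimpleGraph (Fin n)) (m : ℝ) (u v : Fin n) : Prop :=
  ∃ c : G.Walk u u, c.IsCycle ∧ (c.length : ℝ) ≤ m ∧ v ∈ c.support

/-- A pair `{u, v}` is useless if it is `k`-bad for some `2 ≤ k ≤ 0.9 log n`. -/
def Useless {n : ℕ} (x : Fin n → ℝ) (u v : Fin n) : Prop :=
  ∃ k : ℕ, 2 ≤ k ∧ (k : ℝ) ≤ 0.9 * Real.log n ∧ KBad x k u v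

/-- The distance between `u` and `v` is determined by the revealed distances `P`. -/
def Deducible {n : ℕ} (x : Fin n → ℝ) (P : Set (Sym2 (Fin n))) (u v : Fin n) : Prop :=
  ∀ w : Fin n → ℝ, Function.Injective w →
    (∀ i j : Fin n, s(i, j) ∈ P → |w i - w j| = |x i - x j|) →
    |w u - w v| = |x u - x v|

/-! ### Auxiliary material -/

open Finset Function MeasureTheory

section Aux

lemma st11_exists_perm_comp {α β : Type*} [Fintype α] [DecidableEq α] [Fintype β]
    {f g : β → α} (hf : Function.Injective f) (hg : Function.Injective g) :
    ∃ π : Equiv.Perm α, ∀ i, π (f i) = g i := by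
  classical
  set s : Finset α := Finset.univ.image f with hs
  set F : α → α := fun a => if h : ∃ i, f i = a then g h.choose else a with hF
  have hFf : ∀ i, F (f i) = g i := by
    intro i
    have h : ∃ j, f j = f i := ⟨i, rfl⟩
    have h2 := h.choose_spec
    simp only [hF, dif_pos h]
    rw [hf h2]
  have hinj : Set.InjOn F s := by
    intro a ha b hb hab
    simp only [hs, coe_image, Set.mem_image, Finset.mem_coe, Finset.mem_univ] at ha hb
    obtain ⟨i, -, rfl⟩ := ha
    obtain ⟨j, -, rfl⟩ := hb
    rw [hFf, hFf] at hab
    rw [hg hab]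
  obtain ⟨e, he⟩ := Finset.exists_equiv_extend_of_card_eq
    (t := (Finset.univ : Finset α)) (by simp) (Finset.subset_univ (s.image F)) hinj
  refine ⟨e.trans (Equiv.subtypeUnivEquiv fun x => Finset.mem_univ x), fun i => ?_⟩
  have h3 := he (f i) (by simp [hs])
  simpa [Equiv.trans_apply, hFf i] using h3

lemma st11_support_getElem {V : Type*} {G : SimpleGraph V} {a b : V} (p : G.Walk a b) :
    ∀ (i : ℕ) (h : i < p.support.length), p.support[i] = p.getVert i := by
  induction p with
  | nil => intro i h; simp [SimpleGraph.Walk.support_nil] at h; subst h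
           simp [SimpleGraph.Walk.support_nil]
  | @cons u v w hadj q ih =>
    intro i h
    cases i with
    | zero => simp [SimpleGraph.Walk.support_cons]
    | succ i =>
      simp only [SimpleGraph.Walk.support_cons, List.getElem_cons_succ,
        SimpleGraph.Walk.getVert_cons_succ]
      exact ih i (by simpa [SimpleGraph.Walk.support_cons, List.length_cons] using h)

lemma st11_cycle_getVert_injOn {V : Type*} {G : SimpleGraph V} {u : V} {c : G.Walk u u}
    (hc : c.IsCycle) {i j : ℕ} (hi : i < c.length) (hj : j < c.length)
    (h : c.getVert i = c.getVert j) : i = j := by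
  have hlen : c.support.length = c.length + 1 := SimpleGraph.Walk.length_support c
  have htail : c.support.tail.Nodup := hc.support_nodup
  have hcons : c.support = u :: c.support.tail := SimpleGraph.Walk.support_eq_cons c
  have htne : c.support.tail ≠ [] := by
    intro hn
    have h5 : c.support.length = 1 := by rw [hcons, hn]; rfl
    omega
  have hlast : c.support.tail.getLast htne = u := by
    have h1 : c.support.getLast (by rw [hcons]; exact List.cons_ne_nil _ _) = u :=
      SimpleGraph.Walk.getLast_support c
    calc c.support.tail.getLast htne
        = ((u :: c.support.tail).getLast (List.cons_ne_nil _ _)) :=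
          (List.getLast_cons htne).symm
      _ = (c.support.getLast (by rw [hcons]; exact List.cons_ne_nil _ _)) := by
          congr 1; exact hcons.symm
      _ = u := h1
  have hdnd : c.support.dropLast.Nodup := by
    rw [hcons, List.dropLast_cons_of_ne_nil htne]
    refine List.nodup_cons.2 ⟨?_, htail.sublist (List.dropLast_sublist _)⟩
    intro hmem
    have h6 := List.dropLast_append_getLast htne
    rw [← h6, List.nodup_append] at htail
    exact htail.2.2 u hmem u (by simp [hlast]) rfl
  have hdl : c.support.dropLast.length = c.length := by
    rw [List.length_dropLast, hlen]; omega
  have hgi : c.support.dropLast[i]'(by omega) = c.getVert i := by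
    rw [List.getElem_dropLast, st11_support_getElem]
  have hgj : c.support.dropLast[j]'(by omega) = c.getVert j := by
    rw [List.getElem_dropLast, st11_support_getElem]
  exact (hdnd.getElem_inj_iff (hi := by omega) (hj := by omega)).1
    (hgi.trans (h.trans hgj.symm))

variable {n k : ℕ}

def st11_CycTuple {n : ℕ} (P : Set (Sym2 (Fin n))) {k : ℕ} (t : Fin k → Fin n) : Prop :=
  Function.Injective t ∧
  (∀ (j : ℕ) (h : j + 1 < k), s(t ⟨j + 1, h⟩, t ⟨j, Nat.lt_of_succ_lt h⟩) ∈ P) ∧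
  (∀ h : 0 < k, s(t ⟨0, h⟩, t ⟨k - 1, Nat.sub_lt h Nat.one_pos⟩) ∈ P)

lemma st11_deducible_of_cycTuple {x : Fin n → ℝ} {P : Set (Sym2 (Fin n))}
    {t : Fin k → Fin n} (hct : st11_CycTuple P t) (hrec : CycleReconstructible x t)
    {u v : Fin n} {a b : Fin k} (ha : t a = u) (hb : t b = v) :
    Deducible x P u v := by
  intro w hw hP
  have h := hrec (w ∘ t) (fun j hj => hP _ _ (hct.2.1 j hj))
    (fun hk => hP _ _ (hct.2.2 hk)) a b
  simp only [Function.comp_apply, ha, hb] at h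
  exact h

lemma st11_extract {P : Set (Sym2 (Fin n))} {m : ℝ} {u v : Fin n}
    (huv : u ≠ v) (h : OnShortCycle (SimpleGraph.fromEdgeSet P) m u v) :
    ∃ (k : ℕ) (t : Fin k → Fin n) (a b : Fin k),
      3 ≤ k ∧ (k : ℝ) ≤ m ∧ st11_CycTuple P t ∧ t a = u ∧ t b = v := by
  obtain ⟨c, hc, hlen, hv⟩ := h
  have hL3 : 3 ≤ c.length := hc.three_le_length
  obtain ⟨i, hgv, hile⟩ := SimpleGraph.Walk.mem_support_iff_exists_getVert.1 hv
  have hiL : i < c.length := by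
    rcases lt_or_eq_of_le hile with h' | h'
    · exact h'
    · exfalso; rw [h'] at hgv; rw [SimpleGraph.Walk.getVert_length] at hgv; exact huv hgv
  refine ⟨c.length, fun j => c.getVert j, ⟨0, by omega⟩, ⟨i, hiL⟩, hL3, hlen,
    ⟨?_, ?_, ?_⟩, by simp [SimpleGraph.Walk.getVert_zero], hgv⟩
  · intro a b hab
    exact Fin.ext (st11_cycle_getVert_injOn hc a.2 b.2 hab)
  · intro j hj
    have hadj := c.adj_getVert_succ (i := j) (by omega)
    rw [SimpleGraph.fromEdgeSet_adj] at hadj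
    rw [Sym2.eq_swap]
    exact hadj.1
  · intro hk
    have hadj := c.adj_getVert_succ (i := c.length - 1) (by omega)
    have he : c.length - 1 + 1 = c.length := by omega
    rw [he, SimpleGraph.Walk.getVert_length] at hadj
    rw [SimpleGraph.fromEdgeSet_adj] at hadj
    have h0 : c.getVert 0 = u := SimpleGraph.Walk.getVert_zero c
    rw [Sym2.eq_swap]
    simpa [h0] using hadj.1

noncomputable def st11_S (n : ℕ) (u v : Fin n) : Finset (Equiv.Perm (Fin n)) :=
  Finset.univ.filter (fun π => π u = u ∧ π v = v)

noncomputable def st11_Full (u v : Fin n) (a b : Fin k) : Finset (Fin k → Fin n) := by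
  classical exact Finset.univ.filter (fun t => Function.Injective t ∧ t a = u ∧ t b = v)

lemma st11_mem_Full {u v : Fin n} {a b : Fin k} {t : Fin k → Fin n} :
    t ∈ st11_Full u v a b ↔ Function.Injective t ∧ t a = u ∧ t b = v := by
  simp [st11_Full]

lemma st11_mem_S {u v : Fin n} {π : Equiv.Perm (Fin n)} :
    π ∈ st11_S n u v ↔ π u = u ∧ π v = v := by simp [st11_S]

lemma st11_fiber_count {u v : Fin n} {a b : Fin k} {t₀ : Fin k → Fin n}
    (ht₀ : Function.Injective t₀) (h0a : t₀ a = u) (h0b : t₀ b = v)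
    (A : Finset (Fin k → Fin n)) (hA : A ⊆ st11_Full u v a b) :
    ((st11_S n u v).filter (fun π => π.symm ∘ t₀ ∈ A)).card * (st11_Full u v a b).card
      = (st11_S n u v).card * A.card := by
  classical
  have hmaps : ∀ π ∈ st11_S n u v, π.symm ∘ t₀ ∈ st11_Full u v a b := by
    intro π hπ
    rw [st11_mem_S] at hπ
    rw [st11_mem_Full]
    refine ⟨(Equiv.injective _).comp ht₀, ?_, ?_⟩
    · simp only [Function.comp_apply, h0a]
      exact (Equiv.symm_apply_eq π).2 hπ.1.symm
    · simp only [Function.comp_apply, h0b]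
      exact (Equiv.symm_apply_eq π).2 hπ.2.symm
  have hconst : ∀ t ∈ st11_Full u v a b,
      ((st11_S n u v).filter (fun π => π.symm ∘ t₀ = t)).card
        = ((st11_S n u v).filter (fun π => π.symm ∘ t₀ = t₀)).card := by
    intro t ht
    rw [st11_mem_Full] at ht
    obtain ⟨ρ, hρ⟩ := st11_exists_perm_comp ht₀ ht.1
    have hρu : ρ u = u := by have := hρ a; rwa [h0a, ht.2.1] at this
    have hρv : ρ v = v := by have := hρ b; rwa [h0b, ht.2.2] at this
    have hsymm : ∀ i, ρ.symm (t i) = t₀ i := fun i => (Equiv.symm_apply_eq ρ).2 (hρ i).symm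
    apply Finset.card_nbij' (i := fun π => π * ρ) (j := fun σ => σ * ρ⁻¹)
    · intro π hπ
      simp only [Finset.mem_coe, mem_filter, st11_mem_S] at hπ ⊢
      have h2 : ∀ i, π.symm (t₀ i) = t i := fun i => congrFun hπ.2 i
      refine ⟨⟨?_, ?_⟩, ?_⟩
      · simp [Equiv.Perm.mul_apply, hρu, hπ.1.1]
      · simp [Equiv.Perm.mul_apply, hρv, hπ.1.2]
      · funext i
        simp [Equiv.Perm.mul_def, Equiv.symm_trans_apply, h2 i, hsymm i]
    · intro σ hσ
      simp only [Finset.mem_coe, mem_filter, st11_mem_S] at hσ ⊢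
      have h2 : ∀ i, σ.symm (t₀ i) = t₀ i := fun i => congrFun hσ.2 i
      have hρui : ρ⁻¹ u = u := (Equiv.symm_apply_eq ρ).2 hρu.symm
      have hρvi : ρ⁻¹ v = v := (Equiv.symm_apply_eq ρ).2 hρv.symm
      refine ⟨⟨?_, ?_⟩, ?_⟩
      · simp only [Equiv.Perm.mul_apply]; rw [hρui, hσ.1.1]
      · simp only [Equiv.Perm.mul_apply]; rw [hρvi, hσ.1.2]
      · funext i
        simp only [Equiv.Perm.mul_def, Function.comp_apply, Equiv.symm_trans_apply]
        rw [Equiv.Perm.inv_def, Equiv.symm_symm, h2 i, hρ i]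
    · intro π _; group
    · intro σ _; group
  have h1 : (st11_S n u v).card
      = (st11_Full u v a b).card
          * ((st11_S n u v).filter (fun π => π.symm ∘ t₀ = t₀)).card := by
    rw [Finset.card_eq_sum_card_fiberwise hmaps]
    rw [Finset.sum_congr rfl hconst, Finset.sum_const, smul_eq_mul]
  have h2 : ((st11_S n u v).filter (fun π => π.symm ∘ t₀ ∈ A)).card
      = A.card * ((st11_S n u v).filter (fun π => π.symm ∘ t₀ = t₀)).card := by
    have hmaps2 : ∀ π ∈ (st11_S n u v).filter (fun π => π.symm ∘ t₀ ∈ A),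
        π.symm ∘ t₀ ∈ A := fun π h => (mem_filter.1 h).2
    rw [Finset.card_eq_sum_card_fiberwise hmaps2]
    have hfib : ∀ t ∈ A, (((st11_S n u v).filter (fun π => π.symm ∘ t₀ ∈ A)).filter
        (fun π => π.symm ∘ t₀ = t)) = (st11_S n u v).filter (fun π => π.symm ∘ t₀ = t) := by
      intro t ht
      ext π
      simp only [mem_filter]
      constructor
      · rintro ⟨⟨hS, -⟩, h3⟩; exact ⟨hS, h3⟩
      · rintro ⟨hS, h3⟩; exact ⟨⟨hS, h3 ▸ ht⟩, h3⟩
    rw [Finset.sum_congr rfl (fun t ht => by rw [hfib t ht, hconst t (hA ht)]),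
      Finset.sum_const, smul_eq_mul]
  rw [h1, h2]; ring

lemma st11_pair_inj {α : Type*} {a b : α} (hab : a ≠ b) : Function.Injective ![a, b] := by
  intro z w hzw
  fin_cases z <;> fin_cases w <;> simp_all

lemma st11_class_card {u v : Fin n} (huv : u ≠ v) {a b : Fin k} (hab : a ≠ b)
    {i j : Fin k} (hij : i ≠ j) :
    (st11_Full u v i j).card = (st11_Full (k := k) u v a b).card := by
  obtain ⟨τ, hτ⟩ := st11_exists_perm_comp (st11_pair_inj hab) (st11_pair_inj hij)
  have hτa : τ a = i := by simpa using hτ 0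
  have hτb : τ b = j := by simpa using hτ 1
  apply Finset.card_nbij' (i := fun t => t ∘ τ) (j := fun t => t ∘ τ.symm)
  · intro t ht
    rw [Finset.mem_coe, st11_mem_Full] at ht ⊢
    exact ⟨ht.1.comp (Equiv.injective _), by simp [hτa, ht.2.1], by simp [hτb, ht.2.2]⟩
  · intro t ht
    rw [Finset.mem_coe, st11_mem_Full] at ht ⊢
    refine ⟨ht.1.comp (Equiv.injective _), ?_, ?_⟩
    · simp only [Function.comp_apply, ← hτa, Equiv.symm_apply_apply]; exact ht.2.1
    · simp only [Function.comp_apply, ← hτb, Equiv.symm_apply_apply]; exact ht.2.2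
  · intro t _; funext z; simp
  · intro t _; funext z; simp

lemma st11_ncard_setOf {α : Type*} [Fintype α] (p : α → Prop) [DecidablePred p] :
    {x | p x}.ncard = (Finset.univ.filter p).card := by
  rw [← Set.ncard_coe_finset]; congr 1; ext z; simp

lemma st11_cb_card_le {u v : Fin n} (huv : u ≠ v) {a b : Fin k} (hab : a ≠ b) :
    ({t : Fin k → Fin n | Function.Injective t ∧ ContainsBoth u v t}.ncard)
      ≤ k ^ 2 * (st11_Full u v a b).card := by
  classical
  rw [st11_ncard_setOf]
  have hsub : (Finset.univ.filter (fun t : Fin k → Fin n =>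
      Function.Injective t ∧ ContainsBoth u v t)) ⊆
      (Finset.univ ×ˢ Finset.univ : Finset (Fin k × Fin k)).biUnion
        (fun ij => st11_Full u v ij.1 ij.2) := by
    intro t ht
    simp only [mem_filter, Finset.mem_univ, true_and] at ht
    obtain ⟨hinj, ⟨i, hi⟩, ⟨j, hj⟩⟩ := ht
    exact Finset.mem_biUnion.2 ⟨(i, j), by simp, st11_mem_Full.2 ⟨hinj, hi, hj⟩⟩
  refine le_trans (Finset.card_le_card hsub) (le_trans (Finset.card_biUnion_le) ?_)
  have hbound : ∀ ij ∈ (Finset.univ ×ˢ Finset.univ : Finset (Fin k × Fin k)),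
      (st11_Full u v ij.1 ij.2).card ≤ (st11_Full (k := k) u v a b).card := by
    intro ij _
    by_cases hij : ij.1 = ij.2
    · have hemp : st11_Full u v ij.1 ij.2 = ∅ := by
        ext t
        rw [st11_mem_Full]
        simp only [Finset.notMem_empty, iff_false]
        rintro ⟨-, h1, h2⟩
        exact huv (by rw [← h1, ← h2, hij])
      simp [hemp]
    · exact le_of_eq (st11_class_card huv hab hij)
  refine le_trans (Finset.sum_le_sum hbound) ?_
  rw [Finset.sum_const, smul_eq_mul]
  simp [sq]

end Aux

section MeasureAux

open scoped Classical

variable {n k : ℕ} {p : ℝ}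

instance st11_prob {n : ℕ} {p : ℝ} : IsProbabilityMeasure (gnpMeasure n p) := by
  unfold gnpMeasure; infer_instance

lemma st11_gnp_singleton (ω : {e : Sym2 (Fin n) // ¬ e.IsDiag} → Bool) :
    gnpMeasure n p {ω} = ∏ e : {e : Sym2 (Fin n) // ¬ e.IsDiag},
      (PMF.bernoulli (min (Real.toNNReal p) 1) (min_le_right _ _)).toMeasure {ω e} := by
  have h : {ω} = Set.pi Set.univ (fun e => {ω e}) := by
    ext ω'; simp [Set.mem_pi, funext_iff]
  rw [gnpMeasure, h, MeasureTheory.Measure.pi_pi]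

lemma st11_gnp_comp_singleton (σ : Equiv.Perm {e : Sym2 (Fin n) // ¬ e.IsDiag})
    (ω : {e : Sym2 (Fin n) // ¬ e.IsDiag} → Bool) :
    gnpMeasure n p {ω ∘ σ} = gnpMeasure n p {ω} := by
  rw [st11_gnp_singleton, st11_gnp_singleton]
  exact Equiv.prod_comp σ (fun e =>
    (PMF.bernoulli (min (Real.toNNReal p) 1) (min_le_right _ _)).toMeasure {ω e})

lemma st11_gnp_apply (A : Set ({e : Sym2 (Fin n) // ¬ e.IsDiag} → Bool)) :
    gnpMeasure n p A = ∑ ω ∈ Finset.univ.filter (· ∈ A), gnpMeasure n p {ω} := by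
  have h : A = ⋃ ω ∈ Finset.univ.filter (· ∈ A), {ω} := by
    ext ω; simp
  conv_lhs => rw [h]
  rw [measure_biUnion_finset ?hd ?hm]
  case hd =>
    intro ω _ ω' _ hne
    simp [Function.onFun, Set.disjoint_singleton, hne]
  case hm => exact fun ω _ => measurableSet_singleton ω

lemma st11_gnp_measurable (A : Set ({e : Sym2 (Fin n) // ¬ e.IsDiag} → Bool)) :
    MeasurableSet A := (Set.toFinite A).measurableSet

lemma st11_gnp_comp (σ : Equiv.Perm {e : Sym2 (Fin n) // ¬ e.IsDiag})
    (A : Set ({e : Sym2 (Fin n) // ¬ e.IsDiag} → Bool)) :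
    gnpMeasure n p {ω | ω ∘ σ ∈ A} = gnpMeasure n p A := by
  rw [st11_gnp_apply, st11_gnp_apply A]
  refine Finset.sum_nbij' (fun ω => ω ∘ σ) (fun ω => ω ∘ σ.symm) ?_ ?_ ?_ ?_ ?_
  · intro ω hω; simp only [mem_filter, Finset.mem_univ, true_and] at hω ⊢
    exact hω
  · intro ω hω; simp only [mem_filter, Finset.mem_univ, true_and, Set.mem_setOf_eq] at hω ⊢
    have he : (ω ∘ σ.symm) ∘ σ = ω := by funext z; simp
    rwa [he]
  · intro ω _; funext z; simp
  · intro ω _; funext z; simp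
  · intro ω _; exact (st11_gnp_comp_singleton σ ω).symm

noncomputable def st11_sym2Perm (π : Equiv.Perm (Fin n)) : Equiv.Perm (Sym2 (Fin n)) where
  toFun := Sym2.map π
  invFun := Sym2.map π.symm
  left_inv := fun e => by
    rw [Sym2.map_map]
    have h : (π.symm : Fin n → Fin n) ∘ π = id := by funext z; simp
    rw [h, Sym2.map_id, id_eq]
  right_inv := fun e => by
    rw [Sym2.map_map]
    have h : (π : Fin n → Fin n) ∘ π.symm = id := by funext z; simp
    rw [h, Sym2.map_id, id_eq]

noncomputable def st11_idxPerm (π : Equiv.Perm (Fin n)) :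
    Equiv.Perm {e : Sym2 (Fin n) // ¬ e.IsDiag} :=
  Equiv.subtypeEquiv (st11_sym2Perm π)
    (fun e => not_congr (Sym2.isDiag_map π.injective).symm)

lemma st11_mem_revealed_comp (π : Equiv.Perm (Fin n))
    (ω : {e : Sym2 (Fin n) // ¬ e.IsDiag} → Bool) (e : Sym2 (Fin n)) :
    e ∈ revealedSet (ω ∘ st11_idxPerm π) ↔ Sym2.map π e ∈ revealedSet ω := by
  constructor
  · rintro ⟨h, hh⟩
    exact ⟨(not_congr (Sym2.isDiag_map π.injective)).2 h, hh⟩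
  · rintro ⟨h, hh⟩
    refine ⟨(not_congr (Sym2.isDiag_map π.injective)).1 h, ?_⟩
    have heq : (st11_idxPerm π) ⟨e, (not_congr (Sym2.isDiag_map π.injective)).1 h⟩
        = ⟨Sym2.map π e, h⟩ := by
      apply Subtype.ext; rfl
    simp only [Function.comp_apply, heq]
    exact hh

lemma st11_cycTuple_comp (π : Equiv.Perm (Fin n))
    (ω : {e : Sym2 (Fin n) // ¬ e.IsDiag} → Bool) (t : Fin k → Fin n) :
    st11_CycTuple (revealedSet (ω ∘ st11_idxPerm π)) t ↔
      st11_CycTuple (revealedSet ω) (π ∘ t) := by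
  unfold st11_CycTuple
  constructor
  · rintro ⟨hinj, h1, h2⟩
    refine ⟨π.injective.comp hinj, fun j hj => ?_, fun hk => ?_⟩
    · have := (st11_mem_revealed_comp π ω _).1 (h1 j hj)
      rwa [Sym2.map_pair_eq] at this
    · have := (st11_mem_revealed_comp π ω _).1 (h2 hk)
      rwa [Sym2.map_pair_eq] at this
  · rintro ⟨hinj, h1, h2⟩
    refine ⟨fun z w hzw => hinj (by simp [Function.comp_apply, hzw]), fun j hj => ?_,
      fun hk => ?_⟩
    · refine (st11_mem_revealed_comp π ω _).2 ?_
      rw [Sym2.map_pair_eq]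
      exact h1 j hj
    · refine (st11_mem_revealed_comp π ω _).2 ?_
      rw [Sym2.map_pair_eq]
      exact h2 hk

end MeasureAux

section PairBound

open scoped Classical

variable {n : ℕ} {p : ℝ} {x : Fin n → ℝ}

noncomputable def st11_Bpair (n : ℕ) (x : Fin n → ℝ) (u v : Fin n) :
    Set ({e : Sym2 (Fin n) // ¬ e.IsDiag} → Bool) :=
  {ω | OnShortCycle (SimpleGraph.fromEdgeSet (revealedSet ω)) (0.9 * Real.log n) u v ∧
    ¬ Useless x u v ∧ ¬ Deducible x (revealedSet ω) u v}

lemma st11_pair_count (u v : Fin n) (huv : u ≠ v)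
    (ω : {e : Sym2 (Fin n) // ¬ e.IsDiag} → Bool) :
    (((st11_S n u v).filter (fun π => (ω ∘ st11_idxPerm π) ∈ st11_Bpair n x u v)).card : ℝ)
      ≤ (n : ℝ) ^ (-(0.005 : ℝ)) * (0.9 * Real.log n) ^ 2 * (st11_S n u v).card := by
  classical
  by_cases hcase : ((st11_S n u v).filter
      (fun π => (ω ∘ st11_idxPerm π) ∈ st11_Bpair n x u v)).Nonempty
  swap
  · rw [Finset.not_nonempty_iff_eq_empty] at hcase
    rw [hcase]
    have h1 : (0:ℝ) ≤ (n : ℝ) ^ (-(0.005 : ℝ)) * (0.9 * Real.log n) ^ 2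
        * (st11_S n u v).card := by positivity
    simpa using h1
  obtain ⟨π₀, hπ₀⟩ := hcase
  rw [Finset.mem_filter] at hπ₀
  obtain ⟨hπ₀S, hB₀⟩ := hπ₀
  obtain ⟨hosc, huseful, hnded⟩ := hB₀
  obtain ⟨k, t₁, a, b, hk3, hkm, hct₁, hta, htb⟩ := st11_extract huv hosc
  set t₀ : Fin k → Fin n := π₀ ∘ t₁ with ht₀def
  have hct₀ : st11_CycTuple (revealedSet ω) t₀ := (st11_cycTuple_comp π₀ ω t₁).1 hct₁
  have hπ₀u : π₀ u = u := (st11_mem_S.1 hπ₀S).1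
  have hπ₀v : π₀ v = v := (st11_mem_S.1 hπ₀S).2
  have ht₀a : t₀ a = u := by rw [ht₀def]; simp [hta, hπ₀u]
  have ht₀b : t₀ b = v := by rw [ht₀def]; simp [htb, hπ₀v]
  have hab : a ≠ b := fun h => huv (by rw [← ht₀a, h, ht₀b])
  have ht₀inj : Function.Injective t₀ := hct₀.1
  set A : Finset (Fin k → Fin n) :=
    (st11_Full u v a b).filter (fun t => ¬ CycleReconstructible x t) with hAdef
  have hAsub : A ⊆ st11_Full u v a b := Finset.filter_subset _ _
  have hsub : (st11_S n u v).filter (fun π => (ω ∘ st11_idxPerm π) ∈ st11_Bpair n x u v)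
      ⊆ (st11_S n u v).filter (fun π => π.symm ∘ t₀ ∈ A) := by
    intro π hπ
    rw [Finset.mem_filter] at hπ ⊢
    obtain ⟨hπS, hπB⟩ := hπ
    have hπu : π u = u := (st11_mem_S.1 hπS).1
    have hπv : π v = v := (st11_mem_S.1 hπS).2
    refine ⟨hπS, ?_⟩
    have hcomp : π ∘ (π.symm ∘ t₀) = t₀ := by funext z; simp
    have hctπ : st11_CycTuple (revealedSet (ω ∘ st11_idxPerm π)) (π.symm ∘ t₀) := by
      rw [st11_cycTuple_comp π ω, hcomp]; exact hct₀
    have hua : (π.symm ∘ t₀) a = u := by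
      simp only [Function.comp_apply, ht₀a]; exact (Equiv.symm_apply_eq π).2 hπu.symm
    have hvb : (π.symm ∘ t₀) b = v := by
      simp only [Function.comp_apply, ht₀b]; exact (Equiv.symm_apply_eq π).2 hπv.symm
    rw [hAdef, Finset.mem_filter, st11_mem_Full]
    refine ⟨⟨hctπ.1, hua, hvb⟩, ?_⟩
    intro hrec
    exact hπB.2.2 (st11_deducible_of_cycTuple hctπ hrec hua hvb)
  have hfc := st11_fiber_count (n := n) ht₀inj ht₀a ht₀b A hAsub
  have hFull0 : 0 < (st11_Full u v a b).card :=
    Finset.card_pos.2 ⟨t₀, st11_mem_Full.2 ⟨ht₀inj, ht₀a, ht₀b⟩⟩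
  have hAle : (A.card : ℝ) ≤ (({t : Fin k → Fin n | Function.Injective t ∧
      ContainsBoth u v t ∧ ¬ CycleReconstructible x t}).ncard : ℝ) := by
    rw [st11_ncard_setOf]
    have : A ⊆ Finset.univ.filter (fun t : Fin k → Fin n => Function.Injective t ∧
        ContainsBoth u v t ∧ ¬ CycleReconstructible x t) := by
      intro t ht
      rw [hAdef, Finset.mem_filter, st11_mem_Full] at ht
      exact Finset.mem_filter.2 ⟨Finset.mem_univ t,
        ht.1.1, ⟨⟨a, ht.1.2.1⟩, ⟨b, ht.1.2.2⟩⟩, ht.2⟩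
    exact_mod_cast Finset.card_le_card this
  have hnbad : ¬ KBad x k u v := fun hbad => huseful ⟨k, by omega, hkm, hbad⟩
  rw [KBad, not_lt] at hnbad
  have hcb : (({t : Fin k → Fin n | Function.Injective t ∧ ContainsBoth u v t}).ncard : ℝ)
      ≤ (k : ℝ) ^ 2 * (st11_Full u v a b).card := by
    exact_mod_cast st11_cb_card_le huv hab
  have hk2 : ((k : ℝ)) ^ 2 ≤ (0.9 * Real.log n) ^ 2 := by
    have h0k : (0:ℝ) ≤ (k:ℝ) := Nat.cast_nonneg k
    exact pow_le_pow_left₀ h0k hkm 2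
  have hrpow0 : (0:ℝ) ≤ (n : ℝ) ^ (-(0.005 : ℝ)) := Real.rpow_nonneg (Nat.cast_nonneg n) _
  set F := ((st11_Full u v a b).card : ℝ) with hF
  set Sc := ((st11_S n u v).card : ℝ) with hSc
  have hSc0 : (0:ℝ) ≤ Sc := Nat.cast_nonneg _
  have hF0 : (0:ℝ) < F := by rw [hF]; exact_mod_cast hFull0
  have hfcR : (((st11_S n u v).filter (fun π => π.symm ∘ t₀ ∈ A)).card : ℝ) * F
      = Sc * A.card := by rw [hF, hSc]; exact_mod_cast hfc
  have hchain : (((st11_S n u v).filter (fun π => π.symm ∘ t₀ ∈ A)).card : ℝ) * F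
      ≤ ((n : ℝ) ^ (-(0.005 : ℝ)) * (0.9 * Real.log n) ^ 2 * Sc) * F := by
    rw [hfcR]
    calc Sc * (A.card : ℝ)
        ≤ Sc * ((n : ℝ) ^ (-(0.005 : ℝ)) *
            (({t : Fin k → Fin n | Function.Injective t ∧ ContainsBoth u v t}).ncard : ℝ)) := by
          apply mul_le_mul_of_nonneg_left (le_trans hAle hnbad) hSc0
      _ ≤ Sc * ((n : ℝ) ^ (-(0.005 : ℝ)) * ((k:ℝ)^2 * F)) := by
          apply mul_le_mul_of_nonneg_left (mul_le_mul_of_nonneg_left hcb hrpow0) hSc0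
      _ ≤ Sc * ((n : ℝ) ^ (-(0.005 : ℝ)) * ((0.9 * Real.log n)^2 * F)) := by
          apply mul_le_mul_of_nonneg_left (mul_le_mul_of_nonneg_left
            (mul_le_mul_of_nonneg_right hk2 (le_of_lt hF0)) hrpow0) hSc0
      _ = ((n : ℝ) ^ (-(0.005 : ℝ)) * (0.9 * Real.log n) ^ 2 * Sc) * F := by ring
  have hcA := le_of_mul_le_mul_right hchain hF0
  have hcard : ((((st11_S n u v).filter
        (fun π => (ω ∘ st11_idxPerm π) ∈ st11_Bpair n x u v)).card) : ℝ)
      ≤ (((st11_S n u v).filter (fun π => π.symm ∘ t₀ ∈ A)).card : ℝ) := by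
    exact_mod_cast Finset.card_le_card hsub
  exact le_trans hcard hcA

lemma st11_pair_bound (u v : Fin n) (huv : u ≠ v) :
    gnpMeasure n p (st11_Bpair n x u v)
      ≤ ENNReal.ofReal ((n : ℝ) ^ (-(0.005 : ℝ)) * (0.9 * Real.log n) ^ 2) := by
  classical
  set β := (n : ℝ) ^ (-(0.005 : ℝ)) * (0.9 * Real.log n) ^ 2 with hβ
  have hβ0 : 0 ≤ β := by positivity
  have hS0 : 0 < (st11_S n u v).card := Finset.card_pos.2 ⟨1, st11_mem_S.2 ⟨rfl, rfl⟩⟩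
  set B := st11_Bpair n x u v with hB
  have key : ((st11_S n u v).card : ENNReal) * gnpMeasure n p B
      ≤ ((st11_S n u v).card : ENNReal) * ENNReal.ofReal β := by
    have step1 : ((st11_S n u v).card : ENNReal) * gnpMeasure n p B
        = ∑ π ∈ st11_S n u v, gnpMeasure n p {ω | ω ∘ st11_idxPerm π ∈ B} := by
      rw [Finset.sum_congr rfl (fun π _ => st11_gnp_comp (st11_idxPerm π) B),
        Finset.sum_const, nsmul_eq_mul]
    rw [step1]
    have step2 : ∀ π ∈ st11_S n u v, gnpMeasure n p {ω | ω ∘ st11_idxPerm π ∈ B}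
        = ∑ ω ∈ Finset.univ, (if (ω ∘ st11_idxPerm π) ∈ B then gnpMeasure n p {ω} else 0) := by
      intro π _
      rw [st11_gnp_apply]
      rw [Finset.sum_filter]
      apply Finset.sum_congr rfl
      intro ω _
      congr 1
    rw [Finset.sum_congr rfl step2, Finset.sum_comm]
    have step3 : ∀ ω ∈ (Finset.univ : Finset ({e : Sym2 (Fin n) // ¬ e.IsDiag} → Bool)),
        (∑ π ∈ st11_S n u v, if (ω ∘ st11_idxPerm π) ∈ B then gnpMeasure n p {ω} else 0)
          ≤ (ENNReal.ofReal β * (st11_S n u v).card) * gnpMeasure n p {ω} := by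
      intro ω _
      rw [← Finset.sum_filter, Finset.sum_const, nsmul_eq_mul]
      apply mul_le_mul_left
      have hreal := st11_pair_count (x := x) u v huv ω
      have : ((((st11_S n u v).filter
          (fun π => (ω ∘ st11_idxPerm π) ∈ st11_Bpair n x u v)).card) : ENNReal)
          ≤ ENNReal.ofReal (β * (st11_S n u v).card) := by
        rw [← ENNReal.ofReal_natCast]
        exact ENNReal.ofReal_le_ofReal (by rw [hβ]; exact hreal)
      rw [ENNReal.ofReal_mul hβ0, ENNReal.ofReal_natCast] at this
      exact this
    refine le_trans (Finset.sum_le_sum step3) ?_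
    rw [← Finset.mul_sum]
    have huniv : ∑ ω ∈ (Finset.univ : Finset ({e : Sym2 (Fin n) // ¬ e.IsDiag} → Bool)),
        gnpMeasure n p {ω} = 1 := by
      have hu : (Set.univ : Set ({e : Sym2 (Fin n) // ¬ e.IsDiag} → Bool))
          = ⋃ ω ∈ (Finset.univ : Finset ({e : Sym2 (Fin n) // ¬ e.IsDiag} → Bool)), {ω} := by
        ext ω; simp
      have h9 : ∑ ω ∈ (Finset.univ : Finset ({e : Sym2 (Fin n) // ¬ e.IsDiag} → Bool)),
          gnpMeasure n p {ω} = gnpMeasure n p Set.univ := by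
        conv_rhs => rw [hu]
        rw [measure_biUnion_finset ?hd2 ?hm2]
        case hd2 =>
          intro ω _ ω' _ hne
          simp [Function.onFun, Set.disjoint_singleton, hne]
        case hm2 => exact fun ω _ => measurableSet_singleton ω
      rw [h9, measure_univ]
    rw [huniv, mul_one, mul_comm]
  have hne0 : ((st11_S n u v).card : ENNReal) ≠ 0 := Nat.cast_ne_zero.2 hS0.ne'
  have hnetop : ((st11_S n u v).card : ENNReal) ≠ ⊤ := ENNReal.natCast_ne_top _
  exact (ENNReal.mul_le_mul_iff_right hne0 hnetop).1 key

end PairBound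


section Final

open scoped Classical

variable {n : ℕ} {p : ℝ} {x : Fin n → ℝ}

noncomputable def st11_badset (n : ℕ) (x : Fin n → ℝ)
    (ω : {e : Sym2 (Fin n) // ¬ e.IsDiag} → Bool) : Set (Sym2 (Fin n)) :=
  {e : Sym2 (Fin n) | ∃ u v : Fin n, e = s(u, v) ∧ u ≠ v ∧
    OnShortCycle (SimpleGraph.fromEdgeSet (revealedSet ω)) (0.9 * Real.log n) u v ∧
    ¬ Useless x u v ∧ ¬ Deducible x (revealedSet ω) u v}

lemma st11_e_bound (e : Sym2 (Fin n)) :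
    gnpMeasure n p {ω | e ∈ st11_badset n x ω}
      ≤ 2 * ENNReal.ofReal ((n : ℝ) ^ (-(0.005 : ℝ)) * (0.9 * Real.log n) ^ 2) := by
  induction e using Sym2.ind with
  | _ c d =>
  by_cases hcd : c = d
  · subst hcd
    have hempty : {ω : {e : Sym2 (Fin n) // ¬ e.IsDiag} → Bool |
        s(c, c) ∈ st11_badset n x ω} = ∅ := by
      ext ω
      simp only [Set.mem_setOf_eq, Set.mem_empty_iff_false, iff_false]
      rintro ⟨u, v, heq, hne, -⟩
      rw [Sym2.eq_iff] at heq
      rcases heq with ⟨h1, h2⟩ | ⟨h1, h2⟩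
      · exact hne (h1.symm.trans h2)
      · exact hne (h2.symm.trans h1)
    rw [hempty]
    simp
  · have hsub : {ω : {e : Sym2 (Fin n) // ¬ e.IsDiag} → Bool | s(c, d) ∈ st11_badset n x ω}
        ⊆ st11_Bpair n x c d ∪ st11_Bpair n x d c := by
      intro ω hω
      obtain ⟨u, v, heq, hne, h1, h2, h3⟩ := hω
      rw [Sym2.eq_iff] at heq
      rcases heq with ⟨h4, h5⟩ | ⟨h4, h5⟩
      · left; rw [h4, h5]; exact ⟨h1, h2, h3⟩
      · right; rw [h4, h5]; exact ⟨h1, h2, h3⟩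
    calc gnpMeasure n p {ω | s(c, d) ∈ st11_badset n x ω}
        ≤ gnpMeasure n p (st11_Bpair n x c d ∪ st11_Bpair n x d c) := measure_mono hsub
      _ ≤ gnpMeasure n p (st11_Bpair n x c d) + gnpMeasure n p (st11_Bpair n x d c) :=
          measure_union_le _ _
      _ ≤ ENNReal.ofReal ((n : ℝ) ^ (-(0.005 : ℝ)) * (0.9 * Real.log n) ^ 2)
            + ENNReal.ofReal ((n : ℝ) ^ (-(0.005 : ℝ)) * (0.9 * Real.log n) ^ 2) :=
          add_le_add (st11_pair_bound c d hcd) (st11_pair_bound d c (Ne.symm hcd))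
      _ = 2 * ENNReal.ofReal ((n : ℝ) ^ (-(0.005 : ℝ)) * (0.9 * Real.log n) ^ 2) :=
          (two_mul _).symm

lemma st11_ncard_eq_filter {α : Type*} [Fintype α] (s : Set α) :
    s.ncard = (Finset.univ.filter (· ∈ s)).card := by
  rw [← Set.ncard_coe_finset]
  congr 1
  ext z
  simp

lemma st11_sum_bound :
    ENNReal.ofReal ((n : ℝ) ^ ((2 : ℝ) - 0.002)) * gnpMeasure n p
        {ω | ¬ (((st11_badset n x ω).ncard : ℝ) ≤ (n : ℝ) ^ ((2 : ℝ) - 0.002))}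
      ≤ (n ^ 2 : ℕ) *
          (2 * ENNReal.ofReal ((n : ℝ) ^ (-(0.005 : ℝ)) * (0.9 * Real.log n) ^ 2)) := by
  classical
  set A := (n : ℝ) ^ ((2 : ℝ) - 0.002) with hA
  set C : Set ({e : Sym2 (Fin n) // ¬ e.IsDiag} → Bool) :=
    {ω | ¬ (((st11_badset n x ω).ncard : ℝ) ≤ A)} with hC
  rw [st11_gnp_apply C, Finset.mul_sum]
  have h1 : ∀ ω, ω ∈ C →
      ENNReal.ofReal A * gnpMeasure n p {ω}
        ≤ ((st11_badset n x ω).ncard : ENNReal) * gnpMeasure n p {ω} := by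
    intro ω hω
    have hlt : A < ((st11_badset n x ω).ncard : ℝ) := not_le.1 hω
    apply mul_le_mul_left
    calc ENNReal.ofReal A ≤ ENNReal.ofReal ((st11_badset n x ω).ncard : ℝ) :=
        ENNReal.ofReal_le_ofReal (le_of_lt hlt)
      _ = ((st11_badset n x ω).ncard : ENNReal) := ENNReal.ofReal_natCast _
  refine le_trans (Finset.sum_le_sum (fun ω hω => h1 ω (by simpa using hω))) ?_
  refine le_trans (Finset.sum_le_sum_of_subset (Finset.subset_univ _)) ?_
  have h2 : ∀ ω : {e : Sym2 (Fin n) // ¬ e.IsDiag} → Bool,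
      ((st11_badset n x ω).ncard : ENNReal) * gnpMeasure n p {ω}
        = ∑ e ∈ (Finset.univ : Finset (Sym2 (Fin n))),
            (if e ∈ st11_badset n x ω then gnpMeasure n p {ω} else 0) := by
    intro ω
    rw [← Finset.sum_filter, Finset.sum_const, st11_ncard_eq_filter, nsmul_eq_mul]
  rw [Finset.sum_congr rfl (fun ω _ => h2 ω), Finset.sum_comm]
  have h3 : ∀ e : Sym2 (Fin n),
      (∑ ω ∈ (Finset.univ : Finset ({e : Sym2 (Fin n) // ¬ e.IsDiag} → Bool)),
        (if e ∈ st11_badset n x ω then gnpMeasure n p {ω} else 0))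
        = gnpMeasure n p {ω | e ∈ st11_badset n x ω} := by
    intro e
    rw [st11_gnp_apply {ω | e ∈ st11_badset n x ω}, Finset.sum_filter]
    apply Finset.sum_congr rfl
    intro ω _
    simp only [Set.mem_setOf_eq]
  rw [Finset.sum_congr rfl (fun e _ => h3 e)]
  refine le_trans (Finset.sum_le_card_nsmul _ _ _ (fun e _ => st11_e_bound e)) ?_
  rw [Finset.card_univ, nsmul_eq_mul]
  apply mul_le_mul_left
  have hsurj : Function.Surjective (fun z : Fin n × Fin n => s(z.1, z.2)) := by
    intro e
    induction e using Sym2.ind with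
    | _ a b => exact ⟨(a, b), rfl⟩
  have hcard : Fintype.card (Sym2 (Fin n)) ≤ n ^ 2 := by
    calc Fintype.card (Sym2 (Fin n)) ≤ Fintype.card (Fin n × Fin n) :=
        Fintype.card_le_of_surjective _ hsurj
      _ = n ^ 2 := by simp [sq]
  exact_mod_cast hcard

end Final

/-- Whp at most `n ^ (2 - 0.002)` unordered pairs of distinct indices are close and useful
but not deducible. -/
theorem statement11
    (x : (n : ℕ) → Fin n → ℝ) (hx : ∀ n, Function.Injective (x n))
    (p : ℕ → ℝ) (hp : ∀ n, p n ∈ Set.Icc (0 : ℝ) 1) :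
    Filter.Tendsto
      (fun (n : ℕ) => gnpMeasure n (p n)
        {ω | (({e : Sym2 (Fin n) | ∃ u v : Fin n, e = s(u, v) ∧ u ≠ v ∧
            OnShortCycle (SimpleGraph.fromEdgeSet (revealedSet ω)) (0.9 * Real.log n) u v ∧
            ¬ Useless (x n) u v ∧
            ¬ Deducible (x n) (revealedSet ω) u v}).ncard : ℝ)
          ≤ (n : ℝ) ^ ((2 : ℝ) - 0.002)})
      Filter.atTop (nhds 1) := by
  classical
  set E : (n : ℕ) → Set ({e : Sym2 (Fin n) // ¬ e.IsDiag} → Bool) := fun n =>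
    {ω | (((st11_badset n (x n) ω).ncard : ℝ) ≤ (n : ℝ) ^ ((2 : ℝ) - 0.002))} with hE
  set g : ℕ → ℝ := fun n =>
    ((n : ℝ) ^ (2 : ℝ) * (2 * ((n : ℝ) ^ (-(0.005 : ℝ)) * (0.9 * Real.log n) ^ 2)))
      / (n : ℝ) ^ ((2 : ℝ) - 0.002) with hg
  have hcompl : ∀ n : ℕ, 1 ≤ n →
      gnpMeasure n (p n) ((E n)ᶜ) ≤ ENNReal.ofReal (g n) := by
    intro n hn
    have hnpos : (0 : ℝ) < n := by exact_mod_cast hn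
    have hApos : (0 : ℝ) < (n : ℝ) ^ ((2 : ℝ) - 0.002) := Real.rpow_pos_of_pos hnpos _
    have hcompl_eq : (E n)ᶜ
        = {ω | ¬ (((st11_badset n (x n) ω).ncard : ℝ) ≤ (n : ℝ) ^ ((2 : ℝ) - 0.002))} := by
      rw [hE]; ext ω; simp
    rw [hcompl_eq]
    have hsb := st11_sum_bound (n := n) (p := p n) (x := x n)
    have hAne : ENNReal.ofReal ((n : ℝ) ^ ((2 : ℝ) - 0.002)) ≠ 0 := by
      simp only [ne_eq, ENNReal.ofReal_eq_zero, not_le]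
      exact hApos
    have h4 : gnpMeasure n (p n)
        {ω | ¬ (((st11_badset n (x n) ω).ncard : ℝ) ≤ (n : ℝ) ^ ((2 : ℝ) - 0.002))}
        ≤ ((n ^ 2 : ℕ) *
            (2 * ENNReal.ofReal ((n : ℝ) ^ (-(0.005 : ℝ)) * (0.9 * Real.log n) ^ 2)))
          / ENNReal.ofReal ((n : ℝ) ^ ((2 : ℝ) - 0.002)) := by
      rw [ENNReal.le_div_iff_mul_le (Or.inl hAne) (Or.inl ENNReal.ofReal_ne_top)]
      rw [mul_comm]
      exact hsb
    refine le_trans h4 ?_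
    have hnum : ((n ^ 2 : ℕ) : ENNReal) *
        (2 * ENNReal.ofReal ((n : ℝ) ^ (-(0.005 : ℝ)) * (0.9 * Real.log n) ^ 2))
        = ENNReal.ofReal ((n : ℝ) ^ (2 : ℝ) *
            (2 * ((n : ℝ) ^ (-(0.005 : ℝ)) * (0.9 * Real.log n) ^ 2))) := by
      have g1 : ENNReal.ofReal ((n : ℝ) ^ (2 : ℝ)) = ((n ^ 2 : ℕ) : ENNReal) := by
        rw [show ((n : ℝ) ^ (2 : ℝ)) = ((n ^ 2 : ℕ) : ℝ) by
          rw [show (2 : ℝ) = ((2 : ℕ) : ℝ) by norm_num, Real.rpow_natCast]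
          push_cast
          ring]
        exact ENNReal.ofReal_natCast _
      have g2 : ENNReal.ofReal (2 : ℝ) = (2 : ENNReal) := by simp
      conv_rhs => rw [ENNReal.ofReal_mul (by positivity : (0:ℝ) ≤ (n : ℝ) ^ (2 : ℝ))]
      conv_rhs => rw [ENNReal.ofReal_mul (by norm_num : (0:ℝ) ≤ (2:ℝ))]
      rw [g1, g2]
    rw [hnum, ← ENNReal.ofReal_div_of_pos hApos]
  have h003 : (0 : ℝ) < 0.003 := by norm_num
  have hlit := (isLittleO_log_rpow_rpow_atTop 2 h003).tendsto_div_nhds_zero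
  have hight : Filter.Tendsto
      (fun n : ℕ => 1.62 * (Real.log (n : ℝ) ^ (2 : ℝ) / (n : ℝ) ^ (0.003 : ℝ)))
      Filter.atTop (nhds 0) := by
    have h5 := (hlit.const_mul (1.62 : ℝ)).comp (tendsto_natCast_atTop_atTop (R := ℝ))
    simpa [Function.comp_def] using h5
  have hgeq : ∀ n : ℕ, 1 ≤ n →
      g n = 1.62 * (Real.log (n : ℝ) ^ (2 : ℝ) / (n : ℝ) ^ (0.003 : ℝ)) := by
    intro n hn
    have hnpos : (0 : ℝ) < n := by exact_mod_cast hn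
    have e1 : Real.log (n : ℝ) ^ (2 : ℝ) = Real.log (n : ℝ) ^ (2 : ℕ) := by
      rw [← Real.rpow_natCast (Real.log (n : ℝ)) 2]
      norm_num
    have e2 : (n : ℝ) ^ ((2 : ℝ)) * (n : ℝ) ^ (-(0.005 : ℝ)) = (n : ℝ) ^ ((1.995 : ℝ)) := by
      rw [← Real.rpow_add hnpos]
      norm_num
    have e3 : (n : ℝ) ^ ((1.995 : ℝ)) / (n : ℝ) ^ ((2 : ℝ) - 0.002)
        = (n : ℝ) ^ (-(0.003 : ℝ)) := by
      rw [← Real.rpow_sub hnpos]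
      norm_num
    have e4 : (n : ℝ) ^ (-(0.003 : ℝ)) = ((n : ℝ) ^ ((0.003 : ℝ)))⁻¹ :=
      Real.rpow_neg (le_of_lt hnpos) _
    have hc : (n : ℝ) ^ (2 : ℝ) * (2 * ((n : ℝ) ^ (-(0.005 : ℝ)) * (0.9 * Real.log n) ^ 2))
        = (1.62 * Real.log (n : ℝ) ^ (2 : ℕ)) *
            ((n : ℝ) ^ (2 : ℝ) * (n : ℝ) ^ (-(0.005 : ℝ))) := by
      ring
    rw [hg]
    simp only []
    rw [hc, e2, mul_div_assoc, e3, e4, e1]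
    ring
  have hofg : Filter.Tendsto (fun n => ENNReal.ofReal (g n)) Filter.atTop (nhds 0) := by
    have hg0 : Filter.Tendsto g Filter.atTop (nhds 0) := by
      apply hight.congr'
      filter_upwards [Filter.eventually_ge_atTop 1] with n hn
      exact (hgeq n hn).symm
    have h6 := ENNReal.tendsto_ofReal hg0
    simpa using h6
  have hCten : Filter.Tendsto (fun n : ℕ => gnpMeasure n (p n) ((E n)ᶜ))
      Filter.atTop (nhds 0) := by
    apply tendsto_of_tendsto_of_tendsto_of_le_of_le' tendsto_const_nhds hofg
    · filter_upwards with n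
      exact zero_le
    · filter_upwards [Filter.eventually_ge_atTop 1] with n hn
      exact hcompl n hn
  have hfin : Filter.Tendsto (fun n : ℕ => 1 - gnpMeasure n (p n) ((E n)ᶜ))
      Filter.atTop (nhds 1) := by
    have h7 := ENNReal.Tendsto.sub (tendsto_const_nhds (x := (1 : ENNReal))
      (f := Filter.atTop (α := ℕ))) hCten (Or.inl (by simp))
    simpa using h7
  have heq : ∀ n : ℕ, 1 - gnpMeasure n (p n) ((E n)ᶜ) = gnpMeasure n (p n) (E n) := by
    intro n
    have h8 := MeasureTheory.prob_compl_eq_one_sub (μ := gnpMeasure n (p n))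
      (st11_gnp_measurable ((E n)ᶜ))
    rw [compl_compl] at h8
    exact h8.symm
  exact hfin.congr heq
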